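/- Any nonnegative measurable solution U of the system U(x) = 1 + p ∫_E U(y) ν(dy) + (1-p) ∫_E U(y) {}_H P(x,dy) for x ∉ H, U(x) = 0 for x ∈ H, satisfies U(x) ≥ V₁(x) Σ_{t=0}^n (p ∫_E V₁(y) ν(dy))^t for every n ≥ 0 and every x ∈ E, where V₁(x) = Σ_{t=0}^∞ (1-p)^t {}_H P^t(x,E) for x ∉ H and V₁ = 0 on H. Consequently U(x) ≥ V₁(x) Σ_{t=0}^∞ (p ∫ V₁ dν)^t, so the latter is the minimal nonnegative solution. -/

import Mathlib

open MeasureTheory ProbabilityTheory ENNReal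

/-- The `t`-step iterate `P^t` of a transition kernel, with `P^0(x,·) = δ_x`. -/
noncomputable def iterKernel {E : Type*} [MeasurableSpace E] (P : Kernel E E) :
    ℕ → Kernel E E
  | 0 => Kernel.id
  | t + 1 => P ∘ₖ iterKernel P t

/-- The iterates of the taboo kernel `{}_H P(x,Γ) := P(x, Γ \ H)`, given the
complement `Hᶜ` as a measurable set; `{}_H P^0(x,Γ) = δ_x(Γ \ H)`, so that
`{}_H P^0(x,E) = 1{x ∉ H}`. -/
noncomputable def tabooIter {E : Type*} [MeasurableSpace E] (P : Kernel E E)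
    {Hc : Set E} (hHc : MeasurableSet Hc) : ℕ → Kernel E E
  | 0 => Kernel.id.restrict hHc
  | t + 1 => (P.restrict hHc) ∘ₖ tabooIter P hHc t
open scoped Classical

section aux
variable {E : Type*} [MeasurableSpace E]

lemma iterKernel_succ' (K : Kernel E E) [IsSFiniteKernel K] (t : ℕ) :
    iterKernel K (t + 1) = iterKernel K t ∘ₖ K := by
  induction t with
  | zero => show K ∘ₖ Kernel.id = Kernel.id ∘ₖ K; rw [Kernel.comp_id, Kernel.id_comp]
  | succ t ih =>
      show K ∘ₖ iterKernel K (t + 1) = (K ∘ₖ iterKernel K t) ∘ₖ K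
      rw [Kernel.comp_assoc, ← ih]

lemma restrict_id_dirac {Hc : Set E} (hHc : MeasurableSet Hc) {x : E} (hx : x ∈ Hc) :
    (Kernel.id.restrict hHc) x = Measure.dirac x := by
  rw [Kernel.restrict_apply, Kernel.id_apply, MeasureTheory.restrict_dirac' hHc, if_pos hx]

lemma tabooIter_eq (P : Kernel E E) [IsMarkovKernel P] {Hc : Set E}
    (hHc : MeasurableSet Hc) (t : ℕ) :
    tabooIter P hHc t = iterKernel (P.restrict hHc) t ∘ₖ Kernel.id.restrict hHc := by
  induction t with
  | zero => show Kernel.id.restrict hHc = Kernel.id ∘ₖ _; rw [Kernel.id_comp]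
  | succ t ih =>
      show P.restrict hHc ∘ₖ tabooIter P hHc t
        = (P.restrict hHc ∘ₖ iterKernel (P.restrict hHc) t) ∘ₖ Kernel.id.restrict hHc
      rw [ih, Kernel.comp_assoc]

lemma tabooIter_zero_of_not_mem (P : Kernel E E) [IsMarkovKernel P] {Hc : Set E}
    (hHc : MeasurableSet Hc) (t : ℕ) {x : E} (hx : x ∉ Hc) : tabooIter P hHc t x = 0 := by
  rw [tabooIter_eq, Kernel.comp_apply, Kernel.restrict_apply, Kernel.id_apply,
    MeasureTheory.restrict_dirac' hHc, if_neg hx, Measure.bind_zero_left]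

lemma tabooIter_univ_succ (P : Kernel E E) [IsMarkovKernel P] {Hc : Set E}
    (hHc : MeasurableSet Hc) (t : ℕ) {x : E} (hx : x ∈ Hc) :
    tabooIter P hHc (t + 1) x Set.univ
      = ∫⁻ y, tabooIter P hHc t y Set.univ ∂(P.restrict hHc x) := by
  rw [tabooIter_eq P hHc (t + 1), iterKernel_succ',
    Kernel.comp_apply' _ _ _ MeasurableSet.univ, restrict_id_dirac hHc hx,
    lintegral_dirac' _ (Kernel.measurable_coe _ MeasurableSet.univ),
    Kernel.comp_apply' _ _ _ MeasurableSet.univ]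
  refine lintegral_congr_ae ?_
  have hmem : ∀ᵐ y ∂((P.restrict hHc) x), y ∈ Hc := by
    rw [ae_iff]
    have : {y | ¬ y ∈ Hc} = Hcᶜ := rfl
    rw [this, Kernel.restrict_apply' _ _ _ hHc.compl]
    simp
  filter_upwards [hmem] with y hy
  rw [tabooIter_eq P hHc t, Kernel.comp_apply' _ _ _ MeasurableSet.univ,
    restrict_id_dirac hHc hy,
    lintegral_dirac' _ (Kernel.measurable_coe _ MeasurableSet.univ)]

end aux

/-- Any nonnegative measurable solution `U` of
`U(x) = 1 + p ∫ U dν + (1-p) ∫ U(y) {}_H P(x,dy)` for `x ∉ H`, `U = 0` on `H`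
(values in `[0,∞]`), dominates `V₁(x) Σ_{t=0}^n (p ∫ V₁ dν)^t` for every `n`,
hence also `V₁(x) Σ_{t=0}^∞ (p ∫ V₁ dν)^t`; thus the latter is the minimal
nonnegative solution. -/
theorem stmt7 {E : Type*} [MeasurableSpace E]
    (P : Kernel E E) [IsMarkovKernel P]
    (ν : Measure E) [IsProbabilityMeasure ν]
    (p : ℝ≥0∞) (hp0 : 0 < p) (hp1 : p < 1)
    (H : Set E) (hH : MeasurableSet H)
    (U : E → ℝ≥0∞) (hU : Measurable U)
    (hUeq : ∀ x ∉ H, U x = 1 + p * ∫⁻ y, U y ∂ν +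
      (1 - p) * ∫⁻ y, U y ∂((P.restrict hH.compl) x))
    (hUH : ∀ x ∈ H, U x = 0)
    (V₁ : E → ℝ≥0∞)
    (hV₁ : ∀ x, V₁ x = if x ∈ H then 0 else
      ∑' t : ℕ, (1 - p) ^ t * tabooIter P hH.compl t x Set.univ) :
    (∀ (n : ℕ) (x : E),
      V₁ x * ∑ t ∈ Finset.range (n + 1), (p * ∫⁻ y, V₁ y ∂ν) ^ t ≤ U x) ∧
    ∀ x : E, V₁ x * ∑' t : ℕ, (p * ∫⁻ y, V₁ y ∂ν) ^ t ≤ U x := by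
  set K := P.restrict hH.compl with hK
  set h : ℕ → E → ℝ≥0∞ := fun t x => tabooIter P hH.compl t x Set.univ with hh
  have hhm : ∀ t, Measurable (h t) := fun t =>
    Kernel.measurable_coe _ MeasurableSet.univ
  -- V₁ equals the tsum everywhere (it vanishes on H automatically)
  have hV₁' : ∀ x, V₁ x = ∑' t : ℕ, (1 - p) ^ t * h t x := by
    intro x
    rw [hV₁ x]
    by_cases hx : x ∈ H
    · rw [if_pos hx]
      have : ∀ t, h t x = 0 := fun t => by
        rw [hh]; simp [tabooIter_zero_of_not_mem P hH.compl t (show x ∉ Hᶜ by simp [hx])]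
      simp [this]
    · rw [if_neg hx]
  have hV₁m : Measurable V₁ := by
    have : V₁ = fun x => ∑' t : ℕ, (1 - p) ^ t * h t x := funext hV₁'
    rw [this]
    exact Measurable.ennreal_tsum fun t => (hhm t).const_mul _
  set c : ℝ≥0∞ := p * ∫⁻ y, V₁ y ∂ν with hc
  set F : ℕ → E → ℝ≥0∞ :=
    fun m x => ∑ t ∈ Finset.range m, (1 - p) ^ t * h t x with hF
  have hFm : ∀ m, Measurable (F m) := fun m =>
    Finset.measurable_sum _ fun t _ => (hhm t).const_mul _
  -- partial sums recursion, for x ∉ H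
  have hFrec : ∀ m, ∀ x ∉ H, F (m + 1) x = 1 + (1 - p) * ∫⁻ y, F m y ∂(K x) := by
    intro m x hx
    have hx' : x ∈ Hᶜ := hx
    have h0 : h 0 x = 1 := by
      rw [hh]
      show (Kernel.id.restrict hH.compl) x Set.univ = 1
      rw [Kernel.restrict_apply' _ _ _ MeasurableSet.univ, Kernel.id_apply,
        Set.univ_inter, Measure.dirac_apply' _ hH.compl]
      simp [hx']
    have hstep : ∀ t, h (t + 1) x = ∫⁻ y, h t y ∂(K x) := fun t =>
      tabooIter_univ_succ P hH.compl t hx'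
    simp only [hF]
    rw [Finset.sum_range_succ']
    simp only [pow_zero, one_mul, h0]
    rw [add_comm]
    congr 1
    have : ∀ t, (1 - p) ^ (t + 1) * h (t + 1) x
        = (1 - p) * ((1 - p) ^ t * ∫⁻ y, h t y ∂(K x)) := by
      intro t
      rw [hstep, pow_succ, mul_comm ((1-p)^t) (1-p), mul_assoc]
    simp only [this]
    rw [← Finset.mul_sum]
    congr 1
    rw [lintegral_finset_sum _ fun t _ => (hhm t).const_mul ((1 - p) ^ t)]
    exact Finset.sum_congr rfl fun t _ => (lintegral_const_mul _ (hhm t)).symm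
  have hFH : ∀ m, ∀ x ∈ H, F m x = 0 := by
    intro m x hx
    have : ∀ t, h t x = 0 := fun t => by
      rw [hh]; simp [tabooIter_zero_of_not_mem P hH.compl t (show x ∉ Hᶜ by simp [hx])]
    simp [hF, this]
  -- V₁ as sup of partial sums
  have hV₁sup : ∀ x, V₁ x = ⨆ m, F m x := fun x => by
    rw [hV₁' x, ENNReal.tsum_eq_iSup_nat]
  -- the key step lemma
  have key : ∀ a : ℝ≥0∞, (∀ x, V₁ x * a ≤ U x) → ∀ x, V₁ x * (1 + c * a) ≤ U x := by
    intro a ha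
    have hint : c * a ≤ p * ∫⁻ y, U y ∂ν := by
      rw [hc, mul_assoc]
      refine mul_le_mul_right ?_ p
      calc (∫⁻ y, V₁ y ∂ν) * a = ∫⁻ y, V₁ y * a ∂ν := (lintegral_mul_const a hV₁m).symm
        _ ≤ ∫⁻ y, U y ∂ν := lintegral_mono ha
    have hUlb : ∀ x ∉ H, 1 + c * a + (1 - p) * ∫⁻ y, U y ∂(K x) ≤ U x := by
      intro x hx
      rw [hUeq x hx]
      exact add_le_add_left (add_le_add_right hint 1) _
    have hFb : ∀ m x, F m x * (1 + c * a) ≤ U x := by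
      intro m
      induction m with
      | zero => intro x; simp [hF]
      | succ m ih =>
          intro x
          by_cases hx : x ∈ H
          · simp [hFH _ x hx]
          · rw [hFrec m x hx, add_mul, one_mul]
            refine le_trans ?_ (hUlb x hx)
            refine add_le_add_right ?_ _
            rw [mul_assoc]
            refine mul_le_mul_right ?_ _
            calc (∫⁻ y, F m y ∂(K x)) * (1 + c * a)
                = ∫⁻ y, F m y * (1 + c * a) ∂(K x) :=
                  (lintegral_mul_const _ (hFm m)).symm
              _ ≤ ∫⁻ y, U y ∂(K x) := lintegral_mono fun y => ih y
    intro x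
    rw [hV₁sup x, ENNReal.iSup_mul]
    exact iSup_le fun m => hFb m x
  have main : ∀ (n : ℕ) (x : E),
      V₁ x * ∑ t ∈ Finset.range (n + 1), c ^ t ≤ U x := by
    intro n
    induction n with
    | zero =>
        have := key 0 (fun x => by simp)
        intro x
        simpa using this x
    | succ n ih =>
        have hS : ∑ t ∈ Finset.range (n + 2), c ^ t
            = 1 + c * ∑ t ∈ Finset.range (n + 1), c ^ t := by
          rw [Finset.sum_range_succ']
          simp only [pow_zero, pow_succ]
          rw [add_comm, ← Finset.sum_mul, mul_comm]
        intro x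
        rw [hS]
        exact key _ ih x
  refine ⟨main, fun x => ?_⟩
  rw [ENNReal.tsum_eq_iSup_nat, ENNReal.mul_iSup]
  refine iSup_le fun n => ?_
  calc V₁ x * ∑ t ∈ Finset.range n, c ^ t
      ≤ V₁ x * ∑ t ∈ Finset.range (n + 1), c ^ t :=
        mul_le_mul_right (Finset.sum_le_sum_of_subset (Finset.range_subset_range.mpr (by omega))) _
    _ ≤ U x := main n x
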